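/- Let E be a real inner product space, let p, x, y ∈ E, let t ∈ [0,1], and set x' := p + t·(x − p). If ‖y − p‖ ≤ ‖x' − p‖, then ‖x' − y‖ ≤ ‖x − y‖. -/

import Mathlib

theorem aux_key {E : Type*} [NormedAddCommGroup E] [InnerProductSpace ℝ E]
    (v w : E) (t : ℝ) (ht0 : 0 ≤ t) (ht1 : t ≤ 1) (h : ‖w‖ ≤ t * ‖v‖) :
    ‖t • v - w‖ ≤ ‖v - w‖ := by
  have key : ‖t • v - w‖ ^ 2 ≤ ‖v - w‖ ^ 2 := by
    rw [norm_sub_sq_real, norm_sub_sq_real, real_inner_smul_left, norm_smul,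
      Real.norm_eq_abs, abs_of_nonneg ht0]
    have hip := real_inner_le_norm v w
    have hnv : 0 ≤ ‖v‖ := norm_nonneg v
    have hnw : 0 ≤ ‖w‖ := norm_nonneg w
    have hvw : inner ℝ v w ≤ t * ‖v‖ ^ 2 := hip.trans (by nlinarith)
    have h4 := mul_le_mul_of_nonneg_left hvw (show (0:ℝ) ≤ 1 - t by linarith)
    nlinarith [h4, mul_nonneg (sq_nonneg (1 - t)) (sq_nonneg ‖v‖)]
  nlinarith [norm_nonneg (t • v - w), norm_nonneg (v - w), key]

namespace ConvexBarrier

/-- Moving `x` inward along the segment from `p` to `x`, to a point `x'` whose distance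
to `p` is still at least `‖y - p‖`, does not increase the distance to `y`. -/
theorem norm_sub_le_of_mem_segment {E : Type*} [NormedAddCommGroup E] [InnerProductSpace ℝ E]
    (p x y : E) (t : ℝ) (ht0 : 0 ≤ t) (ht1 : t ≤ 1)
    (h : ‖y - p‖ ≤ ‖(p + t • (x - p)) - p‖) :
    ‖(p + t • (x - p)) - y‖ ≤ ‖x - y‖ := by
  have h1 : p + t • (x - p) - y = t • (x - p) - (y - p) := by abel
  have h2 : x - y = (x - p) - (y - p) := by abel
  have h3 : p + t • (x - p) - p = t • (x - p) := by abel
  rw [h1, h2]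
  rw [h3, norm_smul, Real.norm_eq_abs, abs_of_nonneg ht0] at h
  exact aux_key _ _ t ht0 ht1 h

end ConvexBarrier
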